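/- Let f : [0,∞) → ℝ be a C² function and let α, β, γ be positive real constants such that |f''(t) + α f'(t)| ≤ γ e^{-βt} for all t ≥ 0. Then f(t) has a finite limit f_∞ as t → +∞, and for all t ≥ 0 one has: if β < α then |f'(t)| ≤ (|f'(0)| + γ/(α−β)) e^{-βt} and |f(t) − f_∞| ≤ (|f'(0)| + γ/(α−β)) e^{-βt}/β; if β = α then |f'(t)| ≤ (|f'(0)| + γ t) e^{-αt} and |f(t) − f_∞| ≤ (α|f'(0)| + γ(αt+1)) e^{-αt}/α²; if β > α then |f'(t)| ≤ (|f'(0)| + γ/(β−α)) e^{-αt} and |f(t) − f_∞| ≤ (|f'(0)| + γ/(β−α)) e^{-αt}/α. -/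

import Mathlib

open Real Filter MeasureTheory Set Topology


lemma myint_exp (c t : ℝ) (hc : c ≠ 0) :
    ∫ s in (0:ℝ)..t, Real.exp (c*s) = (Real.exp (c*t) - 1)/c := by
  have hd : ∀ s ∈ Set.uIcc (0:ℝ) t,
      HasDerivAt (fun u => Real.exp (c*u)/c) (Real.exp (c*s)) s := by
    intro s _
    have h1 : HasDerivAt (fun u => Real.exp (c*u)) (Real.exp (c*s)*c) s := by
      simpa [mul_comm] using (((hasDerivAt_id s).const_mul c)).exp
    have := h1.div_const c
    simpa [mul_div_cancel_right₀ _ hc] using this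
  have hi : IntervalIntegrable (fun s => Real.exp (c*s)) volume 0 t :=
    (Real.continuous_exp.comp (continuous_const.mul continuous_id)).intervalIntegrable 0 t
  have := intervalIntegral.integral_eq_sub_of_hasDerivAt hd hi
  rw [this]
  field_simp
  simp

lemma mytail (b c d t : ℝ) (hb : 0 < b) (hc : 0 ≤ c) (hd : 0 ≤ d) (ht : 0 ≤ t) :
    MeasureTheory.IntegrableOn (fun s => (c + d*s)*Real.exp (-(b*s))) (Set.Ioi t) ∧
    ∫ s in Set.Ioi t, (c + d*s)*Real.exp (-(b*s)) = ((c+d*t)/b + d/b^2) * Real.exp (-(b*t)) := by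
  set F : ℝ → ℝ := fun s => -((c+d*s)/b + d/b^2) * Real.exp (-(b*s)) with hF
  have hFd : ∀ s ∈ Set.Ici t, HasDerivAt F ((c + d*s)*Real.exp (-(b*s))) s := by
    intro s _
    have he : HasDerivAt (fun u => Real.exp (-(b*u))) (Real.exp (-(b*s))*(-b)) s := by
      simpa using (((hasDerivAt_id s).const_mul b).neg).exp
    have ha : HasDerivAt (fun u => -((c+d*u)/b + d/b^2)) (-(d/b)) s := by
      have : HasDerivAt (fun u : ℝ => (c+d*u)/b + d/b^2) (d/b) s := by
        have h2 : HasDerivAt (fun u : ℝ => c+d*u) d s := by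
          simpa using ((hasDerivAt_id s).const_mul d).const_add c
        simpa using (h2.div_const b).add_const (d/b^2)
      exact this.neg
    have := ha.fun_mul he
    refine this.congr_deriv ?_
    field_simp
    ring
  have hFt : Tendsto F atTop (𝓝 0) := by
    have h1 : Tendsto (fun s : ℝ => Real.exp (-(b*s))) atTop (𝓝 0) := by
      have := Real.tendsto_exp_neg_atTop_nhds_zero.comp
        (tendsto_id.const_mul_atTop hb)
      simpa [Function.comp_def] using this
    have h2 : Tendsto (fun s : ℝ => (b*s) * Real.exp (-(b*s))) atTop (𝓝 0) := by
      have := (tendsto_pow_mul_exp_neg_atTop_nhds_zero 1).comp (tendsto_id.const_mul_atTop hb)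
      simpa [Function.comp_def] using this
    have h3 : Tendsto (fun s : ℝ => (-(c/b + d/b^2)) * Real.exp (-(b*s))
        + (-(d/b^2)) * ((b*s) * Real.exp (-(b*s)))) atTop (𝓝 0) := by
      have := (h1.const_mul (-(c/b + d/b^2))).add (h2.const_mul (-(d/b^2)))
      simpa using this
    refine h3.congr (fun s => ?_)
    rw [hF]
    field_simp
    ring
  have hpos : ∀ s ∈ Set.Ioi t, 0 ≤ (c + d*s)*Real.exp (-(b*s)) := by
    intro s hs
    have hs0 : (0:ℝ) ≤ s := le_trans ht (le_of_lt hs)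
    positivity
  have hint : MeasureTheory.IntegrableOn (fun s => (c + d*s)*Real.exp (-(b*s))) (Set.Ioi t) :=
    integrableOn_Ioi_deriv_of_nonneg' hFd hpos hFt
  refine ⟨hint, ?_⟩
  have := integral_Ioi_of_hasDerivAt_of_tendsto' hFd hint hFt
  rw [this, hF]
  ring

theorem stmt0 (f : ℝ → ℝ) (hf : ContDiff ℝ 2 f)
    (α β γ : ℝ) (hα : 0 < α) (hβ : 0 < β) (hγ : 0 < γ)
    (hode : ∀ t ≥ (0:ℝ), |deriv (deriv f) t + α * deriv f t| ≤ γ * Real.exp (-β * t)) :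
    ∃ finfty : ℝ, Tendsto f atTop (nhds finfty) ∧
      ∀ t ≥ (0:ℝ),
        (β < α →
          |deriv f t| ≤ (|deriv f 0| + γ / (α - β)) * Real.exp (-β * t) ∧
          |f t - finfty| ≤ (|deriv f 0| + γ / (α - β)) * Real.exp (-β * t) / β) ∧
        (β = α →
          |deriv f t| ≤ (|deriv f 0| + γ * t) * Real.exp (-α * t) ∧
          |f t - finfty| ≤ (α * |deriv f 0| + γ * (α * t + 1)) * Real.exp (-α * t) / α ^ 2) ∧
        (α < β →
          |deriv f t| ≤ (|deriv f 0| + γ / (β - α)) * Real.exp (-α * t) ∧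
          |f t - finfty| ≤ (|deriv f 0| + γ / (β - α)) * Real.exp (-α * t) / α) := by
  set g := deriv f with hgdef
  have hfd : Differentiable ℝ f := hf.differentiable (by norm_num)
  have hg1 : ContDiff ℝ 1 g := by
    have h2 : ContDiff ℝ (1+1 : ℕ) f := by exact_mod_cast hf
    exact (contDiff_succ_iff_deriv.mp h2).2.2
  have hgd : Differentiable ℝ g := hg1.differentiable one_ne_zero
  have hgc : Continuous g := hgd.continuous
  have hg'c : Continuous (deriv g) := hg1.continuous_deriv le_rfl
  -- the representation formula
  have keyA : ∀ t : ℝ, Real.exp (α*t) * g t - g 0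
      = ∫ s in (0:ℝ)..t, Real.exp (α*s) * (deriv g s + α * g s) := by
    intro t
    have hd : ∀ s ∈ Set.uIcc (0:ℝ) t,
        HasDerivAt (fun u => Real.exp (α*u) * g u)
          (Real.exp (α*s) * (deriv g s + α * g s)) s := by
      intro s _
      have h1 : HasDerivAt (fun u => Real.exp (α*u)) (Real.exp (α*s)*α) s := by
        simpa [mul_comm] using ((hasDerivAt_id s).const_mul α).exp
      have := h1.fun_mul (hgd s).hasDerivAt
      refine this.congr_deriv ?_
      ring
    have hi : IntervalIntegrable (fun s => Real.exp (α*s) * (deriv g s + α * g s)) volume 0 t :=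
      ((Real.continuous_exp.comp (continuous_const.mul continuous_id)).mul
        (hg'c.add (continuous_const.mul hgc))).intervalIntegrable 0 t
    have := intervalIntegral.integral_eq_sub_of_hasDerivAt hd hi
    rw [this]
    simp
  -- the master bound
  have keyB : ∀ t ≥ (0:ℝ), Real.exp (α*t) * |g t|
      ≤ |g 0| + γ * ∫ s in (0:ℝ)..t, Real.exp ((α-β)*s) := by
    intro t ht
    have hIle : |∫ s in (0:ℝ)..t, Real.exp (α*s) * (deriv g s + α * g s)|
        ≤ ∫ s in (0:ℝ)..t, γ * Real.exp ((α-β)*s) := by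
      have h1 : |∫ s in (0:ℝ)..t, Real.exp (α*s) * (deriv g s + α * g s)|
          ≤ ∫ s in (0:ℝ)..t, |Real.exp (α*s) * (deriv g s + α * g s)| := by
        have := intervalIntegral.norm_integral_le_integral_norm (μ := volume)
          (f := fun s => Real.exp (α*s) * (deriv g s + α * g s)) ht
        simp only [Real.norm_eq_abs] at this
        exact this
      refine h1.trans ?_
      apply intervalIntegral.integral_mono_on ht
      · exact (((Real.continuous_exp.comp (continuous_const.mul continuous_id)).mul
          (hg'c.add (continuous_const.mul hgc))).abs).intervalIntegrable 0 t
      · exact ((continuous_const.mul (Real.continuous_exp.comp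
          (continuous_const.mul continuous_id)))).intervalIntegrable 0 t
      · intro s hs
        rw [abs_mul, Real.abs_exp]
        calc Real.exp (α*s) * |deriv g s + α * g s|
            ≤ Real.exp (α*s) * (γ * Real.exp (-β*s)) := by
              exact mul_le_mul_of_nonneg_left (hode s hs.1) (Real.exp_pos _).le
          _ = γ * (Real.exp (α*s) * Real.exp (-β*s)) := by ring
          _ = γ * Real.exp ((α-β)*s) := by rw [← Real.exp_add]; ring_nf
    have h2 := keyA t
    have h3 : Real.exp (α*t) * |g t| = |Real.exp (α*t) * g t| := by
      rw [abs_mul, Real.abs_exp]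
    rw [h3]
    have h4 : |Real.exp (α*t) * g t| ≤ |g 0| + |∫ s in (0:ℝ)..t, Real.exp (α*s) * (deriv g s + α * g s)| := by
      have : Real.exp (α*t) * g t = g 0 + (Real.exp (α*t) * g t - g 0) := by ring
      rw [this, h2]
      exact abs_add_le _ _
    refine h4.trans ?_
    have h5 : (∫ s in (0:ℝ)..t, γ * Real.exp ((α-β)*s)) = γ * ∫ s in (0:ℝ)..t, Real.exp ((α-β)*s) := by
      simp [intervalIntegral.integral_const_mul]
    linarith [hIle, h5 ▸ hIle]
  -- helper to strip exp factor
  have strip : ∀ t T : ℝ, Real.exp (α*t) * |g t| ≤ T * Real.exp (α*t) → |g t| ≤ T := by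
    intro t T h
    rw [mul_comm] at h
    exact le_of_mul_le_mul_right h (Real.exp_pos _)
  -- case bounds for |g|
  have case1 : β < α → ∀ t ≥ (0:ℝ), |g t| ≤ (|g 0| + γ/(α-β)) * Real.exp (-β*t) := by
    intro hba t ht
    have hc : α - β ≠ 0 := by linarith
    have hJ := myint_exp (α-β) t hc
    have hkb := keyB t ht
    rw [hJ] at hkb
    apply strip
    refine hkb.trans ?_
    have hE : Real.exp (-β*t) * Real.exp (α*t) = Real.exp ((α-β)*t) := by
      rw [← Real.exp_add]; ring_nf
    have hE1 : (1:ℝ) ≤ Real.exp ((α-β)*t) := by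
      rw [show (1:ℝ) = Real.exp 0 by simp]
      exact Real.exp_le_exp.mpr (by nlinarith)
    have hgc0 : 0 < γ/(α-β) := div_pos hγ (by linarith)
    have h0 : 0 ≤ |g 0| := abs_nonneg _
    calc |g 0| + γ * ((Real.exp ((α-β)*t) - 1)/(α-β))
        = |g 0| + (γ/(α-β)) * (Real.exp ((α-β)*t) - 1) := by ring
      _ ≤ (|g 0| + γ/(α-β)) * Real.exp ((α-β)*t) := by nlinarith
      _ = (|g 0| + γ/(α-β)) * Real.exp (-β*t) * Real.exp (α*t) := by rw [mul_assoc, hE]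
  have case2 : β = α → ∀ t ≥ (0:ℝ), |g t| ≤ (|g 0| + γ*t) * Real.exp (-α*t) := by
    intro hbe t ht
    have hkb := keyB t ht
    rw [hbe] at hkb
    have hJ : (∫ s in (0:ℝ)..t, Real.exp ((α-α)*s)) = t := by simp
    rw [hJ] at hkb
    apply strip
    refine hkb.trans ?_
    have hE : Real.exp (-α*t) * Real.exp (α*t) = 1 := by
      rw [← Real.exp_add]; simp
    rw [mul_assoc, hE, mul_one]
  have case3 : α < β → ∀ t ≥ (0:ℝ), |g t| ≤ (|g 0| + γ/(β-α)) * Real.exp (-α*t) := by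
    intro hab t ht
    have hc : α - β ≠ 0 := by linarith
    have hJ := myint_exp (α-β) t hc
    have hkb := keyB t ht
    rw [hJ] at hkb
    apply strip
    refine hkb.trans ?_
    have hE : Real.exp (-α*t) * Real.exp (α*t) = 1 := by
      rw [← Real.exp_add]; simp
    rw [mul_assoc, hE, mul_one]
    have hEpos : 0 < Real.exp ((α-β)*t) := Real.exp_pos _
    have hd : (0:ℝ) < β - α := by linarith
    have key : γ * ((Real.exp ((α-β)*t) - 1)/(α-β)) = γ * (1 - Real.exp ((α-β)*t)) / (β-α) := by
      field_simp
      ring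
    have h1 : γ * ((Real.exp ((α-β)*t) - 1)/(α-β)) ≤ γ/(β-α) := by
      rw [key]
      exact (div_le_div_iff_of_pos_right hd).mpr (by nlinarith)
    linarith
  -- a uniform integrable bound
  obtain ⟨K, m, hm, hKb⟩ : ∃ K m : ℝ, 0 < m ∧ ∀ t ≥ (0:ℝ), |g t| ≤ K * Real.exp (-(m*t)) := by
    rcases lt_trichotomy β α with h | h | h
    · exact ⟨|g 0| + γ/(α-β), β, hβ, fun t ht => by
        simpa [neg_mul] using case1 h t ht⟩
    · refine ⟨|g 0| + 2*γ/α, α/2, by positivity, fun t ht => ?_⟩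
      have hb := case2 h t ht
      refine hb.trans ?_
      have hsplit : Real.exp (-α*t) = Real.exp (-(α/2*t)) * Real.exp (-(α/2*t)) := by
        rw [← Real.exp_add]; ring_nf
      have hE2pos : 0 < Real.exp (-(α/2*t)) := Real.exp_pos _
      have hE2le1 : Real.exp (-(α/2*t)) ≤ 1 := by
        rw [show (1:ℝ) = Real.exp 0 by simp]
        exact Real.exp_le_exp.mpr (by nlinarith)
      have htE2 : t * Real.exp (-(α/2*t)) ≤ 2/α := by
        have h1 : α/2*t ≤ Real.exp (α/2*t) := by
          nlinarith [Real.add_one_le_exp (α/2*t)]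
        have h2 : Real.exp (α/2*t) * Real.exp (-(α/2*t)) = 1 := by
          rw [← Real.exp_add]; simp
        have h3 : α/2 * t * Real.exp (-(α/2*t)) ≤ 1 := by
          calc α/2 * t * Real.exp (-(α/2*t))
              ≤ Real.exp (α/2*t) * Real.exp (-(α/2*t)) :=
                mul_le_mul_of_nonneg_right h1 hE2pos.le
            _ = 1 := h2
        rw [le_div_iff₀ hα]
        nlinarith
      rw [hsplit]
      calc (|g 0| + γ*t) * (Real.exp (-(α/2*t)) * Real.exp (-(α/2*t)))
          = (|g 0| * Real.exp (-(α/2*t))) * Real.exp (-(α/2*t))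
            + γ * ((t * Real.exp (-(α/2*t))) * Real.exp (-(α/2*t))) := by ring
        _ ≤ (|g 0| * 1) * Real.exp (-(α/2*t))
            + γ * ((2/α) * Real.exp (-(α/2*t))) := by
              gcongr
        _ = (|g 0| + 2*γ/α) * Real.exp (-(α/2*t)) := by ring
    · exact ⟨|g 0| + γ/(β-α), α, hα, fun t ht => by
        simpa [neg_mul] using case3 h t ht⟩
  have hIntg : ∀ t : ℝ, 0 ≤ t → MeasureTheory.IntegrableOn g (Set.Ioi t) := by
    intro t ht
    have hbig : MeasureTheory.IntegrableOn (fun s => K * Real.exp (-m*s)) (Set.Ioi t) :=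
      (exp_neg_integrableOn_Ioi t hm).const_mul K
    refine MeasureTheory.Integrable.mono hbig hgc.aestronglyMeasurable.restrict ?_
    filter_upwards [MeasureTheory.ae_restrict_mem measurableSet_Ioi] with s hs
    have hs0 : (0:ℝ) ≤ s := le_trans ht (le_of_lt hs)
    rw [Real.norm_eq_abs, Real.norm_eq_abs]
    refine (hKb s hs0).trans ?_
    rw [neg_mul]
    exact le_abs_self _
  have hftc : ∀ a b : ℝ, f b - f a = ∫ s in a..b, g s := fun a b =>
    (intervalIntegral.integral_eq_sub_of_hasDerivAt (fun s _ => (hfd s).hasDerivAt)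
      (hgc.intervalIntegrable a b)).symm
  set finfty : ℝ := f 0 + ∫ s in Set.Ioi 0, g s with hfin
  have htend : Tendsto f atTop (nhds finfty) := by
    have h1 := MeasureTheory.intervalIntegral_tendsto_integral_Ioi 0 (hIntg 0 le_rfl) tendsto_id
    have h2 : Tendsto (fun T : ℝ => f 0 + ∫ s in (0:ℝ)..(id T), g s) atTop (nhds finfty) :=
      tendsto_const_nhds.add h1
    refine h2.congr fun T => ?_
    have := hftc 0 T
    simp only [id] at *
    linarith
  have htail : ∀ t ≥ (0:ℝ), finfty - f t = ∫ s in Set.Ioi t, g s := by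
    intro t ht
    have h2 := MeasureTheory.intervalIntegral_tendsto_integral_Ioi t (hIntg t ht) tendsto_id
    have h3 : Tendsto (fun T : ℝ => f T - f t) atTop (nhds (finfty - f t)) := htend.sub_const _
    exact tendsto_nhds_unique (h3.congr fun T => hftc t T) h2
  refine ⟨finfty, htend, fun t ht => ?_⟩
  have tailbound : ∀ b C d : ℝ, 0 < b → 0 ≤ C → 0 ≤ d →
      (∀ s ≥ (0:ℝ), |g s| ≤ (C + d*s) * Real.exp (-(b*s))) →
      |f t - finfty| ≤ ((C + d*t)/b + d/b^2) * Real.exp (-(b*t)) := by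
    intro b C d hb hC hd hgb
    obtain ⟨hBint, hBval⟩ := mytail b C d t hb hC hd ht
    rw [abs_sub_comm, htail t ht, ← Real.norm_eq_abs, ← hBval]
    refine MeasureTheory.norm_integral_le_of_norm_le hBint ?_
    filter_upwards [MeasureTheory.ae_restrict_mem measurableSet_Ioi] with s hs
    rw [Real.norm_eq_abs]
    exact hgb s (le_trans ht (le_of_lt hs))
  refine ⟨fun hba => ⟨case1 hba t ht, ?_⟩, fun hbe => ⟨case2 hbe t ht, ?_⟩,
    fun hab => ⟨case3 hab t ht, ?_⟩⟩
  · -- β < α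
    have hC : (0:ℝ) ≤ |g 0| + γ/(α-β) := by
      have := div_pos hγ (show (0:ℝ) < α - β by linarith)
      positivity
    have := tailbound β (|g 0| + γ/(α-β)) 0 hβ hC le_rfl (fun s hs => by
      simpa [neg_mul] using case1 hba s hs)
    refine this.trans (le_of_eq ?_)
    rw [neg_mul]
    ring
  · -- β = α
    subst hbe
    have := tailbound β |g 0| γ hβ (abs_nonneg _) hγ.le (fun s hs => by
      simpa [neg_mul] using case2 rfl s hs)
    refine this.trans (le_of_eq ?_)
    rw [neg_mul]
    field_simp
    ring
  · -- α < β
    have hC : (0:ℝ) ≤ |g 0| + γ/(β-α) := by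
      have := div_pos hγ (show (0:ℝ) < β - α by linarith)
      positivity
    have := tailbound α (|g 0| + γ/(β-α)) 0 hα hC le_rfl (fun s hs => by
      simpa [neg_mul] using case3 hab s hs)
    refine this.trans (le_of_eq ?_)
    rw [neg_mul]
    ring
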